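/- Let A|B|C be a right depth three tower of rings with V = A^C and P = (A ⊗_B A)^C. Then the map p ⊗ p' ↦ p¹ ⊗ p²p'¹ ⊗ p'² gives an isomorphism of abelian groups P ⊗_V P ≅ (A ⊗_B A ⊗_B A)^C, with inverse q¹⊗q²⊗q³ ↦ Σ_i (q¹ ⊗ q²γ_i(q³)) ⊗_V u_i where γ_i, u_i are right D3 quasibases. -/

import Mathlib

open scoped BigOperators

section BTCore

variable {R M N P : Type*} [AddCommGroup M] [AddCommGroup N] [AddCommGroup P]

/-- Relations defining the balanced tensor product of `M` and `N` over the
"scalars" `R`, where `R` acts on the right of `M` via `rho` and on the left of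
`N` via `lam`. -/
inductive BTRel (rho : R → M →+ M) (lam : R → N →+ N) :
    FreeAbelianGroup (M × N) → FreeAbelianGroup (M × N) → Prop
  | addl (m m' : M) (n : N) :
      BTRel rho lam (FreeAbelianGroup.of (m + m', n))
        (FreeAbelianGroup.of (m, n) + FreeAbelianGroup.of (m', n))
  | addr (m : M) (n n' : N) :
      BTRel rho lam (FreeAbelianGroup.of (m, n + n'))
        (FreeAbelianGroup.of (m, n) + FreeAbelianGroup.of (m, n'))
  | bal (r : R) (m : M) (n : N) :
      BTRel rho lam (FreeAbelianGroup.of (rho r m, n))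
        (FreeAbelianGroup.of (m, lam r n))

/-- The balanced tensor product `M ⊗_R N`. -/
def BT (rho : R → M →+ M) (lam : R → N →+ N) : Type _ :=
  (addConGen (BTRel rho lam)).Quotient

namespace BT

variable {rho : R → M →+ M} {lam : R → N →+ N}

instance : AddGroup (BT rho lam) :=
  inferInstanceAs (AddGroup (addConGen (BTRel rho lam)).Quotient)

instance : AddCommGroup (BT rho lam) :=
  { (inferInstance : AddGroup (BT rho lam)) with
    add_comm := fun a b => by
      refine AddCon.induction_on₂ a b fun x y => ?_
      change ((x + y : FreeAbelianGroup (M × N)) :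
        (addConGen (BTRel rho lam)).Quotient) = ((y + x : FreeAbelianGroup (M × N)) : _)
      rw [add_comm] }

/-- The canonical generator `m ⊗ n`. -/
def mk (rho : R → M →+ M) (lam : R → N →+ N) (m : M) (n : N) : BT rho lam :=
  ((FreeAbelianGroup.of (m, n) : FreeAbelianGroup (M × N)) :
    (addConGen (BTRel rho lam)).Quotient)

lemma mk_rel {x y : FreeAbelianGroup (M × N)} (h : BTRel rho lam x y) :
    (x : (addConGen (BTRel rho lam)).Quotient) = (y : _) :=
  (AddCon.eq _).2 (AddConGen.Rel.of _ _ h)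

lemma mk_add_left (m m' : M) (n : N) :
    mk rho lam (m + m') n = mk rho lam m n + mk rho lam m' n := by
  have := mk_rel (BTRel.addl m m' n (rho := rho) (lam := lam))
  exact this

lemma mk_add_right (m : M) (n n' : N) :
    mk rho lam m (n + n') = mk rho lam m n + mk rho lam m n' := by
  have := mk_rel (BTRel.addr m n n' (rho := rho) (lam := lam))
  exact this

lemma mk_bal (r : R) (m : M) (n : N) :
    mk rho lam (rho r m) n = mk rho lam m (lam r n) :=
  mk_rel (BTRel.bal r m n)

/-- Lift a biadditive balanced map to the balanced tensor product. -/
def lift (rho : R → M →+ M) (lam : R → N →+ N) (φ : M → N → P)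
    (h1 : ∀ m m' n, φ (m + m') n = φ m n + φ m' n)
    (h2 : ∀ m n n', φ m (n + n') = φ m n + φ m n')
    (h3 : ∀ r m n, φ (rho r m) n = φ m (lam r n)) : BT rho lam →+ P :=
  AddCon.lift _ (FreeAbelianGroup.lift fun p => φ p.1 p.2)
    (AddCon.addConGen_le.2 (by
      rintro x y h
      cases h with
      | addl m m' n => simp [AddCon.ker_rel, FreeAbelianGroup.lift_apply_of, h1]
      | addr m n n' => simp [AddCon.ker_rel, FreeAbelianGroup.lift_apply_of, h2]
      | bal r m n => simp [AddCon.ker_rel, FreeAbelianGroup.lift_apply_of, h3]))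

@[simp] lemma lift_mk (φ : M → N → P) (h1 h2 h3) (m : M) (n : N) :
    lift rho lam φ h1 h2 h3 (mk rho lam m n) = φ m n := by
  show (addConGen (BTRel rho lam)).lift _ _ ((FreeAbelianGroup.of (m, n) :
    FreeAbelianGroup (M × N)) : (addConGen (BTRel rho lam)).Quotient) = _
  rw [AddCon.lift_coe, FreeAbelianGroup.lift_apply_of]

/-- Induction principle for the balanced tensor product. -/
protected lemma ind {motive : BT rho lam → Prop} (zero : motive 0)
    (mk' : ∀ m n, motive (mk rho lam m n)) (neg : ∀ x, motive x → motive (-x))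
    (add : ∀ x y, motive x → motive y → motive (x + y)) : ∀ x : BT rho lam, motive x := by
  intro x
  refine AddCon.induction_on x fun z => ?_
  induction z using FreeAbelianGroup.induction_on with
  | zero => exact zero
  | of p => exact mk' p.1 p.2
  | neg p h =>
      have : ((-FreeAbelianGroup.of p : FreeAbelianGroup (M × N)) :
          (addConGen (BTRel rho lam)).Quotient) = -(mk rho lam p.1 p.2) := rfl
      rw [this]; exact neg _ (mk' p.1 p.2)
  | add x y hx hy =>
      have : ((x + y : FreeAbelianGroup (M × N)) :
          (addConGen (BTRel rho lam)).Quotient) = (x : _) + (y : _) := rfl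
      rw [this]; exact add _ _ hx hy

lemma hom_ext {f g : BT rho lam →+ P}
    (h : ∀ m n, f (mk rho lam m n) = g (mk rho lam m n)) : f = g := by
  ext x
  refine BT.ind (motive := fun x => f x = g x) ?_ ?_ ?_ ?_ x
  · simp
  · exact h
  · intro y hy; simp [hy]
  · intro y z hy hz; simp [hy, hz]

end BT

end BTCore

section Tensor

variable {B A C P : Type*} [Ring B] [Ring A] [Ring C] [AddCommGroup P]

/-- The tensor product `A ⊗_B A` relative to a ring homomorphism `g : B →+* A`. -/
def Tsr (g : B →+* A) : Type _ :=
  BT (fun b => AddMonoidHom.mulRight (g b)) (fun b => AddMonoidHom.mulLeft (g b))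

instance (g : B →+* A) : AddCommGroup (Tsr g) := inferInstanceAs (AddCommGroup (BT _ _))

namespace Tsr

variable (g : B →+* A)

/-- The generator `x ⊗_B y` of `Tsr g`. -/
def tmk (x y : A) : Tsr g := BT.mk _ _ x y

lemma tmk_add_left (x x' y : A) : tmk g (x + x') y = tmk g x y + tmk g x' y :=
  BT.mk_add_left x x' y

lemma tmk_add_right (x y y' : A) : tmk g x (y + y') = tmk g x y + tmk g x y' :=
  BT.mk_add_right x y y'

lemma tmk_bal (x : A) (b : B) (y : A) : tmk g (x * g b) y = tmk g x (g b * y) :=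
  BT.mk_bal b x y

/-- Lift a biadditive `B`-balanced map `A × A → P` to `Tsr g`. -/
def tlift (φ : A → A → P)
    (h1 : ∀ x x' y, φ (x + x') y = φ x y + φ x' y)
    (h2 : ∀ x y y', φ x (y + y') = φ x y + φ x y')
    (h3 : ∀ x b y, φ (x * g b) y = φ x (g b * y)) : Tsr g →+ P :=
  BT.lift _ _ φ h1 h2 (fun r m n => h3 m r n)

@[simp] lemma tlift_mk (φ : A → A → P) (h1 h2 h3) (x y : A) :
    tlift g φ h1 h2 h3 (tmk g x y) = φ x y :=
  BT.lift_mk φ h1 h2 _ x y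

lemma thom_ext {g : B →+* A} {f f' : Tsr g →+ P}
    (h : ∀ x y, f (tmk g x y) = f' (tmk g x y)) : f = f' :=
  BT.hom_ext h

/-- Left multiplication by `a ∈ A` on the first tensorand. -/
def lmul (a : A) : Tsr g →+ Tsr g :=
  tlift g (fun x y => tmk g (a * x) y)
    (fun x x' y => by rw [mul_add, tmk_add_left])
    (fun x y y' => by rw [tmk_add_right])
    (fun x b y => by rw [← mul_assoc, tmk_bal])

@[simp] lemma lmul_mk (a x y : A) : lmul g a (tmk g x y) = tmk g (a * x) y :=
  tlift_mk g _ _ _ _ x y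

/-- Right multiplication by `a ∈ A` on the second tensorand. -/
def rmul (a : A) : Tsr g →+ Tsr g :=
  tlift g (fun x y => tmk g x (y * a))
    (fun x x' y => by rw [tmk_add_left])
    (fun x y y' => by rw [add_mul, tmk_add_right])
    (fun x b y => by rw [tmk_bal, mul_assoc])

@[simp] lemma rmul_mk (a x y : A) : rmul g a (tmk g x y) = tmk g x (y * a) :=
  tlift_mk g _ _ _ _ x y

lemma lmul_lmul (a a' : A) (p : Tsr g) : lmul g a (lmul g a' p) = lmul g (a * a') p := by
  have : ((lmul g a).comp (lmul g a')) = lmul g (a * a') :=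
    thom_ext fun x y => by simp [mul_assoc]
  exact DFunLike.congr_fun this p

lemma rmul_rmul (a a' : A) (p : Tsr g) : rmul g a (rmul g a' p) = rmul g (a' * a) p := by
  have : ((rmul g a).comp (rmul g a')) = rmul g (a' * a) :=
    thom_ext fun x y => by simp [mul_assoc]
  exact DFunLike.congr_fun this p

lemma lmul_rmul (a a' : A) (p : Tsr g) : lmul g a (rmul g a' p) = rmul g a' (lmul g a p) := by
  have : ((lmul g a).comp (rmul g a')) = (rmul g a').comp (lmul g a) :=
    thom_ext fun x y => by simp
  exact DFunLike.congr_fun this p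

lemma lmul_add_smul (a a' : A) (p : Tsr g) :
    lmul g (a + a') p = lmul g a p + lmul g a' p := by
  have : lmul g (a + a') = lmul g a + lmul g a' :=
    thom_ext fun x y => by simp [add_mul, tmk_add_left]
  rw [this]; rfl

lemma rmul_add_smul (a a' : A) (p : Tsr g) :
    rmul g (a + a') p = rmul g a p + rmul g a' p := by
  have : rmul g (a + a') = rmul g a + rmul g a' :=
    thom_ext fun x y => by simp [mul_add, tmk_add_right]
  rw [this]; rfl

/-- The multiplication map `μ : A ⊗_B A → A`. -/
def mulmap : Tsr g →+ A :=
  tlift g (fun x y => x * y) (fun x x' y => by rw [add_mul])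
    (fun x y y' => by rw [mul_add]) (fun x b y => by rw [mul_assoc])

@[simp] lemma mulmap_mk (x y : A) : mulmap g (tmk g x y) = x * y := tlift_mk g _ _ _ _ x y

end Tsr

section TowerDefs

open Tsr

variable (g : B →+* A) (hC : C →+* A)

/-- `p ∈ (A ⊗_B A)^C` : the `C`-centralizer condition, where `C` maps to `A` via `hC`. -/
def TCent (p : Tsr g) : Prop := ∀ c : C, lmul g (hC c) p = rmul g (hC c) p

/-- `α ∈ End_B A_C` : additive endomorphisms of `A` that are left `B`-linear
(via `g`) and right `C`-linear (via `hC`). -/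
def EndBAC (α : A →+ A) : Prop :=
  (∀ (b : B) (x : A), α (g b * x) = g b * α x) ∧
  ∀ (x : A) (c : C), α (x * hC c) = α x * hC c

/-- The tower is right depth three: `A ⊗_B A` is isomorphic, as `A`-`C`-bimodules,
to a direct summand of `A^n` for some `n`. Here the left `A`-action and right
`C`-action on `A^n` are componentwise, and on `Tsr g` they are `lmul` and `rmul`. -/
def IsRightD3 : Prop :=
  ∃ (n : ℕ) (π : (Fin n → A) →+ Tsr g) (σ : Tsr g →+ (Fin n → A)),
    (∀ (a : A) (v : Fin n → A), π (fun i => a * v i) = lmul g a (π v)) ∧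
    (∀ (c : C) (v : Fin n → A), π (fun i => v i * hC c) = rmul g (hC c) (π v)) ∧
    (∀ (a : A) (p : Tsr g) (i : Fin n), σ (lmul g a p) i = a * σ p i) ∧
    (∀ (c : C) (p : Tsr g) (i : Fin n), σ (rmul g (hC c) p) i = σ p i * hC c) ∧
    (∀ p : Tsr g, π (σ p) = p)

end TowerDefs

end Tensor

open Tsr
section Extra

open Tsr

variable {C B A : Type*} [Ring C] [Ring B] [Ring A] (f : C →+* B) (g : B →+* A)

/-- For `γ` left `B`-linear, the map `A ⊗_B A → A`, `p = p¹ ⊗ p² ↦ p¹ * γ p²`. -/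
def phiMap (γ : A →+ A)
    (hγ : ∀ (b : B) (x : A), γ (g b * x) = g b * γ x) : Tsr g →+ A :=
  tlift g (fun x y => x * γ y)
    (fun x x' y => by rw [add_mul])
    (fun x y y' => by rw [map_add, mul_add])
    (fun x b y => by rw [hγ, mul_assoc])

/-- The centralizer `V = A^C` of the image of `C` in `A`. -/
def Vc : Subring A := Subring.centralizer (Set.range ⇑(g.comp f))

lemma Vc_comm {v : A} (hv : v ∈ Vc f g) (c : C) :
    (g.comp f) c * v = v * (g.comp f) c :=
  Subring.mem_centralizer_iff.mp hv _ ⟨c, rfl⟩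

/-- `P = (A ⊗_B A)^C` as an additive subgroup of `A ⊗_B A`. -/
def PCsub : AddSubgroup (Tsr g) where
  carrier := {p | TCent g (g.comp f) p}
  add_mem' := fun hp hq c => by simp only [map_add, hp c, hq c]
  zero_mem' := fun c => by simp
  neg_mem' := fun hp c => by simp only [map_neg, hp c]

lemma cent_lmul {v : A} (hv : ∀ c : C, (g.comp f) c * v = v * (g.comp f) c)
    {p : Tsr g} (hp : TCent g (g.comp f) p) :
    TCent g (g.comp f) (lmul g v p) := fun c => by
  rw [lmul_lmul, hv c, ← lmul_lmul, hp c, lmul_rmul]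

lemma cent_rmul {v : A} (hv : ∀ c : C, (g.comp f) c * v = v * (g.comp f) c)
    {p : Tsr g} (hp : TCent g (g.comp f) p) :
    TCent g (g.comp f) (rmul g v p) := fun c => by
  rw [lmul_rmul, hp c, rmul_rmul, hv c, ← rmul_rmul]

/-- The left action of `v ∈ V` on `P = (A ⊗_B A)^C`. -/
def smulL (v : Vc f g) : ↥(PCsub f g) →+ ↥(PCsub f g) :=
  AddMonoidHom.mk' (fun p => ⟨lmul g (v : A) p.1, cent_lmul f g (Vc_comm f g v.2) p.2⟩)
    (fun p q => Subtype.ext (by simp))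

/-- The right action of `v ∈ V` on `P = (A ⊗_B A)^C`. -/
def smulR (v : Vc f g) : ↥(PCsub f g) →+ ↥(PCsub f g) :=
  AddMonoidHom.mk' (fun p => ⟨rmul g (v : A) p.1, cent_rmul f g (Vc_comm f g v.2) p.2⟩)
    (fun p q => Subtype.ext (by simp))

end Extra

section Triple

open Tsr

variable {C B A : Type*} [Ring C] [Ring B] [Ring A] (f : C →+* B) (g : B →+* A)

lemma mulmap_rmul (a : A) (p : Tsr g) : mulmap g (rmul g a p) = mulmap g p * a := by
  have h : (mulmap g).comp (rmul g a) = (AddMonoidHom.mulRight a).comp (mulmap g) :=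
    thom_ext fun x y => by simp [mul_assoc]
  exact DFunLike.congr_fun h p

lemma mulmap_lmul (a : A) (p : Tsr g) : mulmap g (lmul g a p) = a * mulmap g p := by
  have h : (mulmap g).comp (lmul g a) = (AddMonoidHom.mulLeft a).comp (mulmap g) :=
    thom_ext fun x y => by simp [mul_assoc]
  exact DFunLike.congr_fun h p

/-- The triple tensor product `A ⊗_B A ⊗_B A`, realized as `(A ⊗_B A) ⊗_B A`. -/
abbrev T3 (g : B →+* A) : Type _ :=
  BT (fun b : B => rmul g (g b)) (fun b : B => AddMonoidHom.mulLeft (g b))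

/-- The generator `x ⊗_B y ⊗_B z` of the triple tensor product. -/
def mk3 (x y z : A) : T3 g := BT.mk _ _ (tmk g x y) z

lemma mk3_balL (x : A) (b : B) (y z : A) :
    mk3 g (x * g b) y z = mk3 g x (g b * y) z := by
  unfold mk3; rw [tmk_bal]

lemma mk3_balR (x y : A) (b : B) (z : A) :
    mk3 g x (y * g b) z = mk3 g x y (g b * z) := by
  have h : tmk g x (y * g b) = rmul g (g b) (tmk g x y) := by rw [rmul_mk]
  unfold mk3; rw [h]
  exact BT.mk_bal b (tmk g x y) z

/-- Left multiplication by `a ∈ A` on the first factor of the triple tensor product. -/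
def lmul3 (a : A) : T3 g →+ T3 g :=
  BT.lift _ _ (fun q z => BT.mk _ _ (lmul g a q) z)
    (fun q q' z => by rw [map_add, BT.mk_add_left])
    (fun q z z' => by rw [BT.mk_add_right])
    (fun b q z => by rw [lmul_rmul]; exact BT.mk_bal b _ z)

@[simp] lemma lmul3_mk3 (a x y z : A) : lmul3 g a (mk3 g x y z) = mk3 g (a * x) y z := by
  unfold lmul3 mk3
  rw [BT.lift_mk, lmul_mk]

/-- Right multiplication by `a ∈ A` on the last factor of the triple tensor product. -/
def rmul3 (a : A) : T3 g →+ T3 g :=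
  BT.lift _ _ (fun q z => BT.mk _ _ q (z * a))
    (fun q q' z => by rw [BT.mk_add_left])
    (fun q z z' => by rw [add_mul, BT.mk_add_right])
    (fun b q z => by
      try dsimp only
      rw [show (AddMonoidHom.mulLeft (g b)) z * a = g b * (z * a) by
        simp [mul_assoc]]
      exact BT.mk_bal b q (z * a))

@[simp] lemma rmul3_mk3 (a x y z : A) : rmul3 g a (mk3 g x y z) = mk3 g x y (z * a) := by
  unfold rmul3 mk3
  rw [BT.lift_mk]

/-- `t ∈ (A ⊗_B A ⊗_B A)^C`, the `C`-centralizer condition. -/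
def Central3 (t : T3 g) : Prop :=
  ∀ c : C, lmul3 g ((g.comp f) c) t = rmul3 g ((g.comp f) c) t

end Triple

section Theta

open Tsr

variable {C B A : Type*} [Ring C] [Ring B] [Ring A] (f : C →+* B) (g : B →+* A)

/-- Auxiliary map: for fixed `x, y`, sends `u ⊗ v ↦ x ⊗ (y u) ⊗ v`. -/
def inmap (x y : A) : Tsr g →+ T3 g :=
  tlift g (fun u v => BT.mk _ _ (tmk g x (y * u)) v)
    (fun u u' v => by rw [mul_add, tmk_add_right, BT.mk_add_left])
    (fun u v v' => by rw [BT.mk_add_right])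
    (fun u b v => by
      try dsimp only
      rw [show tmk g x (y * (u * g b)) = rmul g (g b) (tmk g x (y * u)) by
        rw [rmul_mk, mul_assoc]]
      exact BT.mk_bal b _ v)

@[simp] lemma inmap_mk (x y u v : A) :
    inmap g x y (tmk g u v) = mk3 g x (y * u) v :=
  tlift_mk g _ _ _ _ u v

/-- The map `(A ⊗_B A) × (A ⊗_B A) → A ⊗_B A ⊗_B A`,
`(p, p') ↦ p¹ ⊗ p² p'¹ ⊗ p'²`, as an iterated additive homomorphism. -/
def theta2 : Tsr g →+ (Tsr g →+ T3 g) :=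
  tlift g (fun x y => inmap g x y)
    (fun x x' y => thom_ext fun u v => by
      simp only [inmap_mk, AddMonoidHom.add_apply]
      unfold mk3; rw [tmk_add_left, BT.mk_add_left])
    (fun x y y' => thom_ext fun u v => by
      simp only [inmap_mk, AddMonoidHom.add_apply, add_mul]
      unfold mk3; rw [tmk_add_right, BT.mk_add_left])
    (fun x b y => thom_ext fun u v => by
      simp only [inmap_mk]
      rw [mk3_balL, mul_assoc])

@[simp] lemma theta2_mk (x y u v : A) :
    theta2 g (tmk g x y) (tmk g u v) = mk3 g x (y * u) v := by
  unfold theta2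
  rw [tlift_mk, inmap_mk]

lemma theta2_bal (w : A) (q q' : Tsr g) :
    theta2 g (rmul g w q) q' = theta2 g q (lmul g w q') := by
  induction q using BT.ind with
  | zero => show theta2 g (rmul g w (0 : Tsr g)) q' = theta2 g (0 : Tsr g) (lmul g w q'); simp
  | neg q ih =>
      exact (fun (q : Tsr g) (ih : theta2 g (rmul g w q) q' = theta2 g q (lmul g w q')) =>
        (by simp only [map_neg, AddMonoidHom.neg_apply, ih] :
          theta2 g (rmul g w (-q)) q' = theta2 g (-q) (lmul g w q'))) q ih
  | add q q'' ih ih' =>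
      exact (fun (q q'' : Tsr g) (ih : theta2 g (rmul g w q) q' = theta2 g q (lmul g w q'))
          (ih' : theta2 g (rmul g w q'') q' = theta2 g q'' (lmul g w q')) =>
        (by simp only [map_add, AddMonoidHom.add_apply, ih, ih'] :
          theta2 g (rmul g w (q + q'')) q' = theta2 g (q + q'') (lmul g w q'))) q q'' ih ih'
  | mk' x y =>
      induction q' using BT.ind with
      | zero =>
          show theta2 g (rmul g w (tmk g x y)) (0 : Tsr g)
            = theta2 g (tmk g x y) (lmul g w (0 : Tsr g)); simp
      | neg r ih =>
          exact (fun (r : Tsr g) (ih : theta2 g (rmul g w (tmk g x y)) r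
              = theta2 g (tmk g x y) (lmul g w r)) =>
            (by simp only [map_neg, ih] : theta2 g (rmul g w (tmk g x y)) (-r)
              = theta2 g (tmk g x y) (lmul g w (-r)))) r ih
      | add r r' ih ih' =>
          exact (fun (r r' : Tsr g) (ih : theta2 g (rmul g w (tmk g x y)) r
              = theta2 g (tmk g x y) (lmul g w r))
              (ih' : theta2 g (rmul g w (tmk g x y)) r' = theta2 g (tmk g x y) (lmul g w r')) =>
            (by simp only [map_add, ih, ih'] : theta2 g (rmul g w (tmk g x y)) (r + r')
              = theta2 g (tmk g x y) (lmul g w (r + r')))) r r' ih ih'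
      | mk' u v =>
          show theta2 g (rmul g w (tmk g x y)) (tmk g u v)
            = theta2 g (tmk g x y) (lmul g w (tmk g u v))
          rw [rmul_mk, lmul_mk, theta2_mk, theta2_mk, mul_assoc]

/-- The tensor product `P ⊗_V P` over the centralizer `V`, where
`P = (A ⊗_B A)^C`. -/
abbrev QP (f : C →+* B) (g : B →+* A) : Type _ :=
  BT (fun v : Vc f g => smulR f g v) (fun v : Vc f g => smulL f g v)

/-- The canonical map `P ⊗_V P → (A ⊗_B A ⊗_B A)`,
`p ⊗ p' ↦ p¹ ⊗ p² p'¹ ⊗ p'²`. -/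
def ThetaMap : QP f g →+ T3 g :=
  BT.lift _ _ (fun p p' => theta2 g p.1 p'.1)
    (fun p p' q => by
      try dsimp only
      rw [AddSubgroup.coe_add, map_add, AddMonoidHom.add_apply])
    (fun p q q' => by
      try dsimp only
      rw [AddSubgroup.coe_add, map_add])
    (fun v p p' => by
      try dsimp only
      exact theta2_bal g (v : A) p.1 p'.1)

/-- For `γ ∈ End_B A_C`, the map `A ⊗_B A ⊗_B A → A ⊗_B A`,
`x ⊗ y ⊗ z ↦ x ⊗ y γ(z)`. -/
def stuffMap (γ : A →+ A) (hγ : ∀ (b : B) (x : A), γ (g b * x) = g b * γ x) :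
    T3 g →+ Tsr g :=
  BT.lift _ _ (fun q z => rmul g (γ z) q)
    (fun q q' z => by rw [map_add])
    (fun q z z' => by rw [map_add, rmul_add_smul])
    (fun b q z => by
      try dsimp only
      rw [rmul_rmul, show γ ((AddMonoidHom.mulLeft (g b)) z) = g b * γ z from hγ b z])

end Theta

section MyAuxBT

variable {R M N : Type*} [AddCommGroup M] [AddCommGroup N]
variable {rho : R → M →+ M} {lam : R → N →+ N}

/-- `BT.mk` with fixed right argument, bundled as an additive hom. -/
def auxMkL (n : N) : M →+ BT rho lam :=
  AddMonoidHom.mk' (fun m => BT.mk rho lam m n) (fun m m' => BT.mk_add_left m m' n)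

/-- `BT.mk` with fixed left argument, bundled as an additive hom. -/
def auxMkR (m : M) : N →+ BT rho lam :=
  AddMonoidHom.mk' (fun n => BT.mk rho lam m n) (fun n n' => BT.mk_add_right m n n')

lemma aux_mk_zero_left (n : N) : BT.mk rho lam 0 n = 0 :=
  (auxMkL n).map_zero

lemma aux_mk_zero_right (m : M) : BT.mk rho lam m 0 = 0 :=
  (auxMkR m).map_zero

lemma aux_mk_neg_left (m : M) (n : N) : BT.mk rho lam (-m) n = -BT.mk rho lam m n :=
  (auxMkL n).map_neg m

lemma aux_mk_sum_right {ι : Type*} (s : Finset ι) (m : M) (h : ι → N) :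
    BT.mk rho lam m (∑ i ∈ s, h i) = ∑ i ∈ s, BT.mk rho lam m (h i) :=
  map_sum (auxMkR m) h s

end MyAuxBT

section MyAux

open Tsr

variable {C B A : Type*} [Ring C] [Ring B] [Ring A] (f : C →+* B) (g : B →+* A)

lemma aux_tsr_ind {g : B →+* A} {motive : Tsr g → Prop} (zero : motive 0)
    (mk' : ∀ x y, motive (tmk g x y)) (neg : ∀ x, motive x → motive (-x))
    (add : ∀ x y, motive x → motive y → motive (x + y)) : ∀ x : Tsr g, motive x :=
  BT.ind zero mk' neg add

lemma aux_tmk_zero_right (x : A) : tmk g x 0 = 0 := aux_mk_zero_right x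

lemma aux_tmk_zero_left (y : A) : tmk g 0 y = 0 := aux_mk_zero_left y

lemma aux_rmul_zero (p : Tsr g) : rmul g 0 p = 0 := by
  have h : rmul g (0 : A) = 0 := thom_ext fun x y => by
    rw [rmul_mk, mul_zero, aux_tmk_zero_right]; rfl
  rw [h]; rfl

lemma aux_lmul_zero (p : Tsr g) : lmul g 0 p = 0 := by
  have h : lmul g (0 : A) = 0 := thom_ext fun x y => by
    rw [lmul_mk, zero_mul, aux_tmk_zero_left]; rfl
  rw [h]; rfl

lemma aux_rmul_neg (a : A) (p : Tsr g) : rmul g (-a) p = -(rmul g a p) := by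
  have h := rmul_add_smul g a (-a) p
  rw [add_neg_cancel, aux_rmul_zero] at h
  exact (neg_eq_of_add_eq_zero_right h.symm).symm

lemma aux_lmul_neg (a : A) (p : Tsr g) : lmul g (-a) p = -(lmul g a p) := by
  have h := lmul_add_smul g a (-a) p
  rw [add_neg_cancel, aux_lmul_zero] at h
  exact (neg_eq_of_add_eq_zero_right h.symm).symm

lemma aux_theta2_lmul (a : A) (p q : Tsr g) :
    theta2 g (lmul g a p) q = lmul3 g a (theta2 g p q) := by
  induction p using aux_tsr_ind with
  | zero => simp
  | neg p ih => simp only [map_neg, AddMonoidHom.neg_apply, ih]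
  | add p p' ih ih' => simp only [map_add, AddMonoidHom.add_apply, ih, ih']
  | mk' x y =>
      induction q using aux_tsr_ind with
      | zero => simp
      | neg r ih => simp only [map_neg, ih]
      | add r r' ih ih' => simp only [map_add, ih, ih']
      | mk' u v =>
          show theta2 g (lmul g a (tmk g x y)) (tmk g u v)
            = lmul3 g a (theta2 g (tmk g x y) (tmk g u v))
          rw [lmul_mk, theta2_mk, theta2_mk, lmul3_mk3]

lemma aux_theta2_rmul (a : A) (p q : Tsr g) :
    theta2 g p (rmul g a q) = rmul3 g a (theta2 g p q) := by
  induction p using aux_tsr_ind with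
  | zero => simp
  | neg p ih => simp only [map_neg, AddMonoidHom.neg_apply, ih]
  | add p p' ih ih' => simp only [map_add, AddMonoidHom.add_apply, ih, ih']
  | mk' x y =>
      induction q using aux_tsr_ind with
      | zero => simp
      | neg r ih => simp only [map_neg, ih]
      | add r r' ih ih' => simp only [map_add, ih, ih']
      | mk' u v =>
          show theta2 g (tmk g x y) (rmul g a (tmk g u v))
            = rmul3 g a (theta2 g (tmk g x y) (tmk g u v))
          rw [rmul_mk, theta2_mk, theta2_mk, rmul3_mk3]

lemma aux_theta2_one (q : Tsr g) (z : A) :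
    theta2 g q (tmk g 1 z) = BT.mk _ _ q z := by
  induction q using aux_tsr_ind with
  | zero =>
      rw [map_zero, aux_mk_zero_left]; rfl
  | neg p ih =>
      rw [map_neg, AddMonoidHom.neg_apply, ih, aux_mk_neg_left]
  | add p p' ih ih' =>
      rw [map_add, AddMonoidHom.add_apply, ih, ih', BT.mk_add_left]
  | mk' x y =>
      show theta2 g (tmk g x y) (tmk g 1 z) = BT.mk _ _ (tmk g x y) z
      rw [theta2_mk, mul_one]; rfl

lemma aux_stuffMap_mk (γ : A →+ A) (hγ : ∀ (b : B) (x : A), γ (g b * x) = g b * γ x)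
    (q : Tsr g) (z : A) :
    stuffMap g γ hγ (BT.mk _ _ q z : T3 g) = rmul g (γ z) q :=
  BT.lift_mk _ _ _ _ q z

lemma aux_stuff_lmul3 (γ : A →+ A) (hγ : ∀ (b : B) (x : A), γ (g b * x) = g b * γ x)
    (a : A) (t : T3 g) :
    stuffMap g γ hγ (lmul3 g a t) = lmul g a (stuffMap g γ hγ t) := by
  induction t using BT.ind with
  | zero => simp
  | neg t ih => simp only [map_neg, ih]
  | add t t' ih ih' => simp only [map_add, ih, ih']
  | mk' q z =>
      show stuffMap g γ hγ (lmul3 g a (BT.mk _ _ q z)) = lmul g a (stuffMap g γ hγ (BT.mk _ _ q z))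
      have h1 : lmul3 g a (BT.mk _ _ q z : T3 g) = BT.mk _ _ (lmul g a q) z :=
        BT.lift_mk _ _ _ _ q z
      rw [h1, aux_stuffMap_mk, aux_stuffMap_mk, lmul_rmul]

lemma aux_stuff_rmul3C (γ : A →+ A) (hγ : ∀ (b : B) (x : A), γ (g b * x) = g b * γ x)
    (hγ2 : ∀ (x : A) (c : C), γ (x * (g.comp f) c) = γ x * (g.comp f) c)
    (c : C) (t : T3 g) :
    stuffMap g γ hγ (rmul3 g ((g.comp f) c) t) = rmul g ((g.comp f) c) (stuffMap g γ hγ t) := by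
  induction t using BT.ind with
  | zero => simp
  | neg t ih => simp only [map_neg, ih]
  | add t t' ih ih' => simp only [map_add, ih, ih']
  | mk' q z =>
      show stuffMap g γ hγ (rmul3 g ((g.comp f) c) (BT.mk _ _ q z))
        = rmul g ((g.comp f) c) (stuffMap g γ hγ (BT.mk _ _ q z))
      have h1 : rmul3 g ((g.comp f) c) (BT.mk _ _ q z : T3 g)
          = BT.mk _ _ q (z * (g.comp f) c) := BT.lift_mk _ _ _ _ q z
      rw [h1, aux_stuffMap_mk, aux_stuffMap_mk, hγ2, rmul_rmul]

lemma aux_phiMap_mk (γ : A →+ A) (hγ : ∀ (b : B) (x : A), γ (g b * x) = g b * γ x)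
    (x y : A) : phiMap g γ hγ (tmk g x y) = x * γ y :=
  tlift_mk g _ _ _ _ x y

lemma aux_phi_lmul (γ : A →+ A) (hγ : ∀ (b : B) (x : A), γ (g b * x) = g b * γ x)
    (a : A) (p : Tsr g) :
    phiMap g γ hγ (lmul g a p) = a * phiMap g γ hγ p := by
  induction p using aux_tsr_ind with
  | zero => simp
  | neg p ih => simp only [map_neg, ih, mul_neg]
  | add p p' ih ih' => simp only [map_add, ih, ih', mul_add]
  | mk' x y =>
      show phiMap g γ hγ (lmul g a (tmk g x y)) = a * phiMap g γ hγ (tmk g x y)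
      rw [lmul_mk, aux_phiMap_mk, aux_phiMap_mk, mul_assoc]

lemma aux_phi_rmulC (γ : A →+ A) (hγ : ∀ (b : B) (x : A), γ (g b * x) = g b * γ x)
    (hγ2 : ∀ (x : A) (c : C), γ (x * (g.comp f) c) = γ x * (g.comp f) c)
    (c : C) (p : Tsr g) :
    phiMap g γ hγ (rmul g ((g.comp f) c) p) = phiMap g γ hγ p * (g.comp f) c := by
  induction p using aux_tsr_ind with
  | zero => simp
  | neg p ih => simp only [map_neg, ih, neg_mul]
  | add p p' ih ih' => simp only [map_add, ih, ih', add_mul]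
  | mk' x y =>
      show phiMap g γ hγ (rmul g ((g.comp f) c) (tmk g x y))
        = phiMap g γ hγ (tmk g x y) * (g.comp f) c
      rw [rmul_mk, aux_phiMap_mk, aux_phiMap_mk, hγ2, mul_assoc]

lemma aux_stuff_theta (γ : A →+ A) (hγ : ∀ (b : B) (x : A), γ (g b * x) = g b * γ x)
    (p q : Tsr g) :
    stuffMap g γ hγ (theta2 g p q) = rmul g (phiMap g γ hγ q) p := by
  induction p using aux_tsr_ind with
  | zero => simp
  | neg p ih => simp only [map_neg, AddMonoidHom.neg_apply, ih]
  | add p p' ih ih' => simp only [map_add, AddMonoidHom.add_apply, ih, ih']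
  | mk' x y =>
      induction q using aux_tsr_ind with
      | zero => rw [map_zero, map_zero, map_zero, aux_rmul_zero]
      | neg r ih => rw [map_neg, map_neg, ih, map_neg, aux_rmul_neg]
      | add r r' ih ih' =>
          rw [map_add, map_add, ih, ih', map_add, rmul_add_smul]
      | mk' u v =>
          show stuffMap g γ hγ (theta2 g (tmk g x y) (tmk g u v))
            = rmul g (phiMap g γ hγ (tmk g u v)) (tmk g x y)
          rw [theta2_mk, aux_phiMap_mk]
          show stuffMap g γ hγ (BT.mk _ _ (tmk g x (y * u)) v : T3 g) = _
          rw [aux_stuffMap_mk, rmul_mk, rmul_mk, mul_assoc]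

end MyAux


set_option maxHeartbeats 2000000 in
/-- Let `A|B|C` be a right depth three tower of rings with
quasibases `γ_i`, `u_i`, `V = A^C` and `P = (A ⊗_B A)^C`.  Then
`p ⊗ p' ↦ p¹ ⊗ p² p'¹ ⊗ p'²` gives an isomorphism of abelian groups
`P ⊗_V P ≅ (A ⊗_B A ⊗_B A)^C`, with inverse
`q¹ ⊗ q² ⊗ q³ ↦ ∑ i (q¹ ⊗ q² γ_i(q³)) ⊗_V u_i`. -/
theorem PC_tensor_PC_iso_triple_centralizer {C B A : Type*} [Ring C] [Ring B] [Ring A]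
    (f : C →+* B) (g : B →+* A) (n : ℕ) (γ : Fin n → (A →+ A)) (u : Fin n → Tsr g)
    (hγ : ∀ i, EndBAC g (g.comp f) (γ i)) (hu : ∀ i, TCent g (g.comp f) (u i))
    (hqb : ∀ x y : A, tmk g x y = ∑ i, lmul g (x * γ i y) (u i)) :
    (∀ p p' : ↥(PCsub f g), Central3 f g (ThetaMap f g (BT.mk _ _ p p'))) ∧
    Function.Injective ⇑(ThetaMap f g) ∧
    (∀ t : T3 g, Central3 f g t → ∃ q : QP f g, ThetaMap f g q = t) ∧
    (∀ (i : Fin n) (t : T3 g), Central3 f g t →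
        TCent g (g.comp f) (stuffMap g (γ i) (hγ i).1 t)) ∧
    (∀ t : T3 g, Central3 f g t → ∀ ps : Fin n → ↥(PCsub f g),
        (∀ i, (ps i : Tsr g) = stuffMap g (γ i) (hγ i).1 t) →
        ThetaMap f g (∑ i, BT.mk _ _ (ps i) (⟨u i, hu i⟩ : ↥(PCsub f g))) = t) := by
  have hTheta_mk : ∀ (p p' : ↥(PCsub f g)),
      ThetaMap f g (BT.mk _ _ p p') = theta2 g p.1 p'.1 := fun p p' =>
    BT.lift_mk _ _ _ _ p p'
  -- Part 1
  have part1 : ∀ p p' : ↥(PCsub f g), Central3 f g (ThetaMap f g (BT.mk _ _ p p')) := by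
    intro p p' c
    have hp : TCent g (g.comp f) p.1 := p.2
    have hp' : TCent g (g.comp f) p'.1 := p'.2
    rw [hTheta_mk, ← aux_theta2_lmul, hp c, theta2_bal, hp' c, aux_theta2_rmul]
  -- every image of ThetaMap is central
  have hcent : ∀ ξ : QP f g, Central3 f g (ThetaMap f g ξ) := by
    intro ξ
    induction ξ using BT.ind with
    | zero => intro c; simp
    | mk' p p' => exact part1 p p'
    | neg x ih => intro c; rw [map_neg, map_neg, map_neg, ih c]
    | add x y ihx ihy => intro c; rw [map_add, map_add, map_add, ihx c, ihy c]
  -- Part 4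
  have part4 : ∀ (i : Fin n) (t : T3 g), Central3 f g t →
      TCent g (g.comp f) (stuffMap g (γ i) (hγ i).1 t) := by
    intro i t ht c
    rw [← aux_stuff_lmul3, ht c, aux_stuff_rmul3C f g _ _ (hγ i).2]
  -- quasibase expansion in `Tsr g`
  have expand : ∀ q : Tsr g,
      ∑ i, lmul g (phiMap g (γ i) (hγ i).1 q) (u i) = q := by
    intro q
    induction q using aux_tsr_ind with
    | zero => simp [aux_lmul_zero]
    | neg p ih =>
        simp only [map_neg, aux_lmul_neg, Finset.sum_neg_distrib, ih]
    | add p p' ih ih' =>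
        simp only [map_add, lmul_add_smul, Finset.sum_add_distrib, ih, ih']
    | mk' x y =>
        show ∑ i, lmul g (phiMap g (γ i) (hγ i).1 (tmk g x y)) (u i) = tmk g x y
        have h1 : ∀ i : Fin n, phiMap g (γ i) (hγ i).1 (tmk g x y) = x * γ i y :=
          fun i => aux_phiMap_mk g _ _ x y
        rw [Finset.sum_congr rfl fun i _ => by rw [h1 i]]
        exact (hqb x y).symm
  -- expansion in `T3 g`
  have expand3 : ∀ t : T3 g,
      ∑ i, theta2 g (stuffMap g (γ i) (hγ i).1 t) (u i) = t := by
    intro t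
    induction t using BT.ind with
    | zero => simp
    | neg t ih =>
        simp only [map_neg, AddMonoidHom.neg_apply, Finset.sum_neg_distrib, ih]
    | add t t' ih ih' =>
        simp only [map_add, AddMonoidHom.add_apply, Finset.sum_add_distrib, ih, ih']
    | mk' q z =>
        have h1 : ∀ i : Fin n, stuffMap g (γ i) (hγ i).1 (BT.mk _ _ q z : T3 g)
            = rmul g (γ i z) q := fun i => aux_stuffMap_mk g _ _ q z
        rw [Finset.sum_congr rfl fun i _ => by rw [h1 i, theta2_bal]]
        rw [← map_sum (theta2 g q)]
        have h2 : ∑ i, lmul g (γ i z) (u i) = tmk g 1 z := by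
          have := hqb 1 z
          simp only [one_mul] at this
          exact this.symm
        rw [h2, aux_theta2_one]
  -- Part 5
  have part5 : ∀ t : T3 g, ∀ ps : Fin n → ↥(PCsub f g),
      (∀ i, (ps i : Tsr g) = stuffMap g (γ i) (hγ i).1 t) →
      ThetaMap f g (∑ i, BT.mk _ _ (ps i) (⟨u i, hu i⟩ : ↥(PCsub f g))) = t := by
    intro t ps hps
    rw [map_sum]
    rw [Finset.sum_congr rfl fun i _ => by
      rw [hTheta_mk (ps i) ⟨u i, hu i⟩, hps i]]
    exact expand3 t
  -- Part 2 : injectivity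
  have part2 : Function.Injective ⇑(ThetaMap f g) := by
    have hΦadd : ∀ ξ η : QP f g,
        (∑ i, BT.mk _ _ (⟨stuffMap g (γ i) (hγ i).1 (ThetaMap f g (ξ + η)),
            part4 i _ (hcent (ξ + η))⟩ : ↥(PCsub f g)) (⟨u i, hu i⟩ : ↥(PCsub f g)) : QP f g)
        = (∑ i, BT.mk _ _ (⟨stuffMap g (γ i) (hγ i).1 (ThetaMap f g ξ),
            part4 i _ (hcent ξ)⟩ : ↥(PCsub f g)) (⟨u i, hu i⟩ : ↥(PCsub f g)))
          + (∑ i, BT.mk _ _ (⟨stuffMap g (γ i) (hγ i).1 (ThetaMap f g η),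
            part4 i _ (hcent η)⟩ : ↥(PCsub f g)) (⟨u i, hu i⟩ : ↥(PCsub f g))) := by
      intro ξ η
      rw [← Finset.sum_add_distrib]
      refine Finset.sum_congr rfl fun i _ => ?_
      rw [← BT.mk_add_left]
      congr 1
      exact Subtype.ext (by simp only [AddSubgroup.coe_add, map_add])
    set Φ : QP f g →+ QP f g := AddMonoidHom.mk'
      (fun ξ => ∑ i, BT.mk _ _ (⟨stuffMap g (γ i) (hγ i).1 (ThetaMap f g ξ),
          part4 i _ (hcent ξ)⟩ : ↥(PCsub f g)) (⟨u i, hu i⟩ : ↥(PCsub f g))) hΦadd with hΦ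
    have key : ∀ (p p' : ↥(PCsub f g)) (w : Fin n → ↥(Vc f g))
        (qs : Fin n → ↥(PCsub f g)),
        (∀ i, qs i = smulR f g (w i) p) →
        (∑ i, lmul g ((w i : A)) (u i)) = (p' : Tsr g) →
        (∑ i, BT.mk _ _ (qs i) (⟨u i, hu i⟩ : ↥(PCsub f g)) : QP f g)
          = BT.mk _ _ p p' := by
      intro p p' w qs hqs hsum
      have step1 : (∑ i, BT.mk _ _ (qs i) (⟨u i, hu i⟩ : ↥(PCsub f g)) : QP f g)
          = ∑ i, BT.mk _ _ p (smulL f g (w i) (⟨u i, hu i⟩ : ↥(PCsub f g))) := by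
        refine Finset.sum_congr rfl fun i _ => ?_
        refine Eq.trans (congrArg (fun q : ↥(PCsub f g) =>
          (BT.mk _ _ q (⟨u i, hu i⟩ : ↥(PCsub f g)) : QP f g)) (hqs i)) ?_
        exact BT.mk_bal (w i) p (⟨u i, hu i⟩ : ↥(PCsub f g))
      have step2 : (∑ i, BT.mk _ _ p (smulL f g (w i) (⟨u i, hu i⟩ : ↥(PCsub f g))) : QP f g)
          = BT.mk _ _ p p' := by
        refine Eq.trans (aux_mk_sum_right _ p _).symm ?_
        refine congrArg _ (Subtype.ext ?_)
        exact Eq.trans (map_sum (PCsub f g).subtype _ _) hsum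
      exact step1.trans step2
    have hid : ∀ ξ : QP f g, Φ ξ = ξ := by
      intro ξ
      induction ξ using BT.ind with
      | zero => rw [map_zero]
      | neg x ih => rw [map_neg, ih]
      | add x y ihx ihy => rw [map_add, ihx, ihy]
      | mk' p p' =>
          have hp' : TCent g (g.comp f) p'.1 := p'.2
          have hw : ∀ i : Fin n, phiMap g (γ i) (hγ i).1 (p' : Tsr g) ∈ Vc f g := by
            intro i
            refine Subring.mem_centralizer_iff.mpr ?_
            rintro _ ⟨c, rfl⟩
            calc (g.comp f) c * phiMap g (γ i) (hγ i).1 (p' : Tsr g)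
                = phiMap g (γ i) (hγ i).1 (lmul g ((g.comp f) c) p'.1) :=
                  (aux_phi_lmul g _ _ _ _).symm
              _ = phiMap g (γ i) (hγ i).1 (rmul g ((g.comp f) c) p'.1) := by rw [hp' c]
              _ = phiMap g (γ i) (hγ i).1 (p' : Tsr g) * (g.comp f) c :=
                  aux_phi_rmulC f g _ _ (hγ i).2 c p'.1
          refine key p p' (fun i => ⟨_, hw i⟩)
            (fun i => ⟨stuffMap g (γ i) (hγ i).1 (ThetaMap f g (BT.mk _ _ p p')),
              part4 i _ (part1 p p')⟩)
            (fun i => Subtype.ext ?_) (expand p'.1)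
          show stuffMap g (γ i) (hγ i).1 (ThetaMap f g (BT.mk _ _ p p'))
            = rmul g (phiMap g (γ i) (hγ i).1 p'.1) p.1
          rw [hTheta_mk, aux_stuff_theta]
    intro ξ η h
    have : Φ ξ = Φ η := by
      simp only [hΦ, AddMonoidHom.mk'_apply]
      refine Finset.sum_congr rfl fun i _ => ?_
      refine congrArg (fun q : ↥(PCsub f g) =>
        (BT.mk _ _ q (⟨u i, hu i⟩ : ↥(PCsub f g)) : QP f g)) ?_
      exact Subtype.ext (congrArg (stuffMap g (γ i) (hγ i).1) h)
    rw [← hid ξ, ← hid η, this]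
  -- assemble
  refine ⟨part1, part2, ?_, part4, fun t _ ps hps => part5 t ps hps⟩
  intro t ht
  exact ⟨∑ i, BT.mk _ _ (⟨stuffMap g (γ i) (hγ i).1 t, part4 i t ht⟩ : ↥(PCsub f g))
      (⟨u i, hu i⟩ : ↥(PCsub f g)),
    part5 t _ fun i => rfl⟩
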